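/- A binary word w is central if and only if it is a power of a single letter or there exist palindromes P and Q such that w = P01Q = Q10P. Moreover, in the latter case, P and Q are central words, |P|+2 and |Q|+2 are coprime, and w has periods |P|+2 and |Q|+2. -/

import Mathlib

/-- A word is primitive if it is not a proper power: `w = v^n` implies `n = 1`. -/
def Primitive {α : Type*} (w : List α) : Prop :=
  ∀ (v : List α) (n : ℕ), w = (List.replicate n v).flatten → n = 1

/-- A Lyndon word: nonempty and lexicographically strictly smaller than all
its proper nonempty suffixes. -/
def Lyndon {α : Type*} [LinearOrder α] (w : List α) : Prop :=
  w ≠ [] ∧ ∀ u v : List α, w = u ++ v → u ≠ [] → v ≠ [] → List.Lex (· < ·) w v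

/-- A Lyndon word for the reversed order `1 < 0` on `Bool`. -/
def LyndonRev (w : List Bool) : Prop :=
  w ≠ [] ∧ ∀ u v : List Bool, w = u ++ v → u ≠ [] → v ≠ [] → List.Lex (· > ·) w v

/-- A binary word is balanced if the numbers of `1`s in any two factors of the
same length differ by at most 1. (`false` plays the role of `0`, `true` of `1`.) -/
def Balanced01 (w : List Bool) : Prop :=
  ∀ u v : List Bool, u <:+: w → v <:+: w → u.length = v.length →
    (u.count true : ℤ) - (v.count true : ℤ) ≤ 1

/-- `w` has period `p`: `w[i] = w[i+p]` for all valid indices. -/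
def HasPeriod (w : List Bool) (p : ℕ) : Prop :=
  ∀ i : ℕ, i + p < w.length → w[i]? = w[i + p]?

/-- A central word: it has coprime periods `p`, `q` and length `p + q - 2`. -/
def Central (w : List Bool) : Prop :=
  ∃ p q : ℕ, Nat.Coprime p q ∧ HasPeriod w p ∧ HasPeriod w q ∧ w.length + 2 = p + q

/-- The lower Christoffel word of slope `b/a`: letter `i` is `1` (`true`) iff the
line `y = bx/(a+b)`... encoded via floor differences `⌊(i+1)b/(a+b)⌋ - ⌊ib/(a+b)⌋`. -/
def chr (a b : ℕ) : List Bool :=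
  List.ofFn (fun i : Fin (a + b) =>
    decide ((i : ℕ) * b / (a + b) < ((i : ℕ) + 1) * b / (a + b)))

/-- An (upward) digitally convex word: all factors of its Lyndon factorization
(for the order `0 < 1`) are balanced Lyndon words, i.e. primitive lower
Christoffel words. -/
def DC (w : List Bool) : Prop :=
  ∃ L : List (List Bool), L.flatten = w ∧ (∀ x ∈ L, Lyndon x ∧ Balanced01 x) ∧
    L.Chain' (fun a b => ¬ List.Lex (· < ·) a b)

/-- A downward digitally convex word: all factors of its Lyndon factorization
for the order `1 < 0` are balanced. -/
def DCdown (w : List Bool) : Prop :=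
  ∃ L : List (List Bool), L.flatten = w ∧ (∀ x ∈ L, LyndonRev x ∧ Balanced01 x) ∧
    L.Chain' (fun a b => ¬ List.Lex (· > ·) a b)

/-- `(u, v)` is the standard factorization of `u ++ v`: both parts nonempty and
`v` is the lexicographically least proper nonempty suffix of `u ++ v`. -/
def StdFact (u v : List Bool) : Prop :=
  u ≠ [] ∧ v ≠ [] ∧
    ∀ s : List Bool, s ≠ [] → s ≠ u ++ v → s <:+ u ++ v →
      s = v ∨ List.Lex (· < ·) v s

/-- A word is unbordered if it has no nonempty proper border. -/
def Unbordered (w : List Bool) : Prop :=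
  ∀ u : List Bool, u <+: w → u <:+ w → u ≠ w → u = []

section CentralAux
open List

lemma tri_get_left {P Q : List Bool} {a b : Bool} {i : ℕ} (h : i < P.length) :
    (P ++ [a,b] ++ Q)[i]? = P[i]? := by
  rw [getElem?_append, if_pos (by simp; omega), getElem?_append, if_pos h]

lemma tri_get_a {P Q : List Bool} {a b : Bool} :
    (P ++ [a,b] ++ Q)[P.length]? = some a := by
  rw [getElem?_append, if_pos (by simp), getElem?_append_right le_rfl]
  simp

lemma tri_get_b {P Q : List Bool} {a b : Bool} :
    (P ++ [a,b] ++ Q)[P.length + 1]? = some b := by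
  rw [getElem?_append, if_pos (by simp), getElem?_append_right (by omega)]
  simp

lemma tri_get_right {P Q : List Bool} {a b : Bool} (i : ℕ) :
    (P ++ [a,b] ++ Q)[P.length + 2 + i]? = Q[i]? := by
  rw [getElem?_append_right (by simp)]
  congr 1
  simp +arith

lemma tri_len {P Q : List Bool} {a b : Bool} :
    (P ++ [a,b] ++ Q).length = P.length + Q.length + 2 := by
  simp
  omega

lemma periods_of_decomp {w P Q : List Bool} {a b : Bool}
    (h1 : w = P ++ [a,b] ++ Q) (h2 : w = Q ++ [b,a] ++ P) :
    _root_.HasPeriod w (Q.length + 2) ∧ _root_.HasPeriod w (P.length + 2) := by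
  have hl : w.length = P.length + Q.length + 2 := by rw [h1]; exact tri_len
  constructor
  · intro i hi
    have hiP : i < P.length := by omega
    calc w[i]? = P[i]? := by rw [h1]; exact tri_get_left hiP
    _ = w[i + (Q.length + 2)]? := by
        rw [h2, show i + (Q.length + 2) = Q.length + 2 + i by ring, tri_get_right]
  · intro i hi
    have hiQ : i < Q.length := by omega
    calc w[i]? = Q[i]? := by rw [h2]; exact tri_get_left hiQ
    _ = w[i + (P.length + 2)]? := by
        rw [h1, show i + (P.length + 2) = P.length + 2 + i by ring, tri_get_right]

lemma pal_of_decomp {w P Q : List Bool} {a b : Bool} (hP : P.Palindrome) (hQ : Q.Palindrome)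
    (h1 : w = P ++ [a,b] ++ Q) (h2 : w = Q ++ [b,a] ++ P) : w.Palindrome := by
  apply Palindrome.of_reverse_eq
  have key : (P ++ [a,b] ++ Q).reverse = Q ++ [b,a] ++ P := by
    simp [hP.reverse_eq, hQ.reverse_eq]
  rw [h1, key, ← h2, h1]

lemma central_replicate (n : ℕ) (x : Bool) : Central (replicate n x) := by
  refine ⟨1, n + 1, by simp, ?_, ?_, by simp; omega⟩
  · intro i hi
    simp only [length_replicate] at hi
    rw [getElem?_replicate, getElem?_replicate, if_pos (by omega), if_pos (by omega)]
  · intro i hi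
    simp only [length_replicate] at hi
    omega

lemma replicate_of_period_one {w : List Bool} (h : _root_.HasPeriod w 1) :
    ∃ (x : Bool) (n : ℕ), w = replicate n x := by
  match w, h with
  | [], _ => exact ⟨false, 0, rfl⟩
  | hd :: tl, h =>
    refine ⟨hd, tl.length + 1, ?_⟩
    have key : ∀ i, i < tl.length + 1 → (hd :: tl)[i]? = some hd := by
      intro i
      induction i with
      | zero => intro _; simp
      | succ k ih =>
        intro hk
        have hp := h k (by simpa using hk)
        rw [← hp]
        exact ih (by omega)
    apply ext_getElem?
    intro i
    rw [getElem?_replicate]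
    split
    · exact key i (by assumption)
    · exact getElem?_eq_none (by simp; omega)

lemma drop_eq_take_of_period {w : List Bool} {p : ℕ} (h : _root_.HasPeriod w p) :
    w.drop p = w.take (w.length - p) := by
  apply ext_getElem?
  intro i
  rw [getElem?_drop, getElem?_take]
  split
  · rename_i hi
    rw [Nat.add_comm]
    exact (h i (by omega)).symm
  · rename_i hi
    exact getElem?_eq_none (by omega)

lemma hasPeriod_take {w : List Bool} {p k : ℕ} (h : _root_.HasPeriod w p) : _root_.HasPeriod (w.take k) p := by
  intro i hi
  rw [length_take] at hi
  rw [getElem?_take, getElem?_take, if_pos (by omega), if_pos (by omega)]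
  exact h i (by omega)

lemma take_add_two {w : List Bool} {k : ℕ} {a b : Bool} (ha : w[k]? = some a)
    (hb : w[k+1]? = some b) : w.take (k+2) = w.take k ++ [a, b] := by
  rw [show k + 2 = (k+1)+1 from rfl, take_succ, take_succ, hb, ha]
  simp

lemma pal_replicate (n : ℕ) (x : Bool) : (replicate n x).Palindrome :=
  Palindrome.of_reverse_eq reverse_replicate

lemma mainB : ∀ n w P Q (a b : Bool), a ≠ b → w.length = n →
    P.Palindrome → Q.Palindrome → w = P ++ [a,b] ++ Q → w = Q ++ [b,a] ++ P →
    Central P ∧ Central Q ∧ Nat.Coprime (P.length + 2) (Q.length + 2) := by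
  intro n
  induction n using Nat.strong_induction_on with
  | _ n IH =>
  have core : ∀ (w P Q : List Bool) (a b : Bool), a ≠ b → w.length = n →
      P.Palindrome → Q.Palindrome → w = P ++ [a,b] ++ Q → w = Q ++ [b,a] ++ P →
      P.length < Q.length →
      Central P ∧ Central Q ∧ Nat.Coprime (P.length + 2) (Q.length + 2) := by
    intro w P Q a b hab hn hP hQ h1 h2 hlt
    have hlw : w.length = P.length + Q.length + 2 := by rw [h1]; exact tri_len
    have hper := periods_of_decomp h1 h2
    have hQdrop : w.drop (P.length + 2) = Q := by
      rw [h1, show P.length + 2 = (P ++ [a,b]).length by simp, drop_left]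
    have hQtake : Q = w.take Q.length := by
      have e : w.take (w.length - (P.length + 2)) = w.take Q.length := by
        rw [show w.length - (P.length + 2) = Q.length by omega]
      rw [← e, ← drop_eq_take_of_period hper.2, hQdrop]
    have hPtake : P = w.take P.length := by
      rw [h1, append_assoc]
      exact (take_left' rfl).symm
    by_cases hc : P.length + 2 ≤ Q.length
    · -- main recursive case
      have ht1 : w.take (P.length + 2) = P ++ [a, b] := by
        rw [h1, append_assoc, ← append_assoc P [a,b] Q]
        exact take_left' (by simp)
      have ht2 : Q.take (P.length + 2) = P ++ [a, b] := by
        conv_lhs => rw [hQtake]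
        rw [take_take, show (P.length + 2) ⊓ Q.length = P.length + 2 by omega]
        exact ht1
      have hQ1 : Q = P ++ [a,b] ++ Q.drop (P.length + 2) := by
        conv_lhs => rw [← take_append_drop (P.length + 2) Q]
        rw [ht2]
      set Q0 := Q.drop (P.length + 2) with hQ0def
      have hQ0len : Q0.length = Q.length - (P.length + 2) := by simp [hQ0def]
      have hQper : _root_.HasPeriod Q (P.length + 2) := by
        have := hasPeriod_take (k := Q.length) hper.2
        rwa [← hQtake] at this
      have hQ0take : Q0 = Q.take (Q.length - (P.length + 2)) := by
        rw [hQ0def, drop_eq_take_of_period hQper]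
      have hrev : Q = Q0.reverse ++ [b,a] ++ P := by
        have e : (P ++ [a,b] ++ Q0).reverse = Q0.reverse ++ [b,a] ++ P := by
          simp [hP.reverse_eq]
        rw [← e, ← hQ1, hQ.reverse_eq]
      have h3 : Q.take Q0.length = Q0.reverse := by
        conv_lhs => rw [hrev]
        rw [append_assoc]
        exact take_left' (by simp)
      have hQ0rev : Q0.reverse = Q0 := by
        rw [← h3, hQ0len]
        exact hQ0take.symm
      have hQ2 : Q = Q0 ++ [b,a] ++ P := by rw [← hQ0rev]; exact hrev
      have hQ0pal : Q0.Palindrome := Palindrome.of_reverse_eq hQ0rev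
      obtain ⟨cP, cQ0, cop⟩ := IH Q.length (by omega) Q P Q0 a b hab rfl hP hQ0pal hQ1 hQ2
      have hper2 := periods_of_decomp hQ1 hQ2
      have cQ : Central Q := ⟨P.length + 2, Q0.length + 2, cop, hper2.2, hper2.1, by omega⟩
      refine ⟨cP, cQ, ?_⟩
      rw [show Q.length + 2 = Q0.length + 2 + (P.length + 2) by omega]
      exact Nat.coprime_add_self_right.2 cop
    · -- case q = p + 1
      have hq : Q.length = P.length + 1 := by omega
      have ha0 : w[P.length]? = some a := by rw [h1]; exact tri_get_a
      have key : ∀ j, j ≤ P.length → w[P.length - j]? = some a := by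
        intro j
        induction j with
        | zero => intro _; simpa using ha0
        | succ k ihk =>
          intro hk
          have s1 := hper.2 (P.length - k) (by omega)
          have s2 := hper.1 (P.length - (k+1)) (by omega)
          rw [s2, show P.length - (k+1) + (Q.length + 2) = P.length - k + (P.length + 2) by omega,
            ← s1]
          exact ihk (by omega)
      have key' : ∀ i, i ≤ P.length → w[i]? = some a := by
        intro i hi
        have := key (P.length - i) (by omega)
        rwa [show P.length - (P.length - i) = i by omega] at this
      have hPrep : P = replicate P.length a := by
        rw [eq_replicate_iff]
        refine ⟨rfl, fun c hc' => ?_⟩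
        obtain ⟨i, hi, hgi⟩ := getElem_of_mem hc'
        have e : P[i]? = some a := by
          rw [← tri_get_left (Q := Q) (a := a) (b := b) hi, ← h1]
          exact key' i (by omega)
        rw [getElem?_eq_getElem hi, hgi] at e
        exact Option.some.inj e
      have hQrep : Q = replicate Q.length a := by
        rw [eq_replicate_iff]
        refine ⟨rfl, fun c hc' => ?_⟩
        obtain ⟨i, hi, hgi⟩ := getElem_of_mem hc'
        have e : Q[i]? = w[P.length + 2 + i]? := by
          rw [← hQdrop, getElem?_drop]
        have e2 : w[P.length + 2 + i]? = some a := by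
          rw [show P.length + 2 + i = i + (P.length + 2) by omega, ← hper.2 i (by omega)]
          exact key' i (by omega)
        rw [getElem?_eq_getElem hi, hgi] at e
        rw [e2] at e
        exact Option.some.inj e
      refine ⟨?_, ?_, ?_⟩
      · rw [hPrep]; exact central_replicate _ _
      · rw [hQrep]; exact central_replicate _ _
      · rw [show Q.length + 2 = 1 + (P.length + 2) by omega]
        exact Nat.coprime_add_self_right.2 (Nat.coprime_one_right _)
  intro w P Q a b hab hn hP hQ h1 h2
  rcases lt_trichotomy P.length Q.length with h | h | h
  · exact core w P Q a b hab hn hP hQ h1 h2 h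
  · exfalso
    have e1 : w.take P.length = P := by rw [h1, append_assoc]; exact take_left' rfl
    have e2 : w.take Q.length = Q := by rw [h2, append_assoc]; exact take_left' rfl
    have ga : w[P.length]? = some a := by rw [h1]; exact tri_get_a
    have gb : w[Q.length]? = some b := by rw [h2]; exact tri_get_a
    rw [← h] at gb
    rw [ga] at gb
    exact hab (Option.some.inj gb)
  · obtain ⟨cQ, cP, cop⟩ := core w Q P b a (Ne.symm hab) hn hQ hP h2 h1 h
    exact ⟨cP, cQ, cop.symm⟩

lemma mainA : ∀ n (w : List Bool) (p q : ℕ), w.length = n → Nat.Coprime p q →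
    _root_.HasPeriod w p → _root_.HasPeriod w q → w.length + 2 = p + q →
    (∃ (x : Bool) (k : ℕ), w = replicate k x) ∨
    ∃ P Q : List Bool, P.Palindrome ∧ Q.Palindrome ∧
      w = P ++ [false, true] ++ Q ∧ w = Q ++ [true, false] ++ P ∧
      (P.length + 2 = p ∧ Q.length + 2 = q ∨ P.length + 2 = q ∧ Q.length + 2 = p) := by
  intro n
  induction n using Nat.strong_induction_on with
  | _ n IH =>
  have core : ∀ (w : List Bool) (p q : ℕ), w.length = n → Nat.Coprime p q →
      _root_.HasPeriod w p → _root_.HasPeriod w q → w.length + 2 = p + q → 2 ≤ p → p < q →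
      (¬ ∃ (x : Bool) (k : ℕ), w = replicate k x) →
      ∃ P Q : List Bool, P.Palindrome ∧ Q.Palindrome ∧
        w = P ++ [false, true] ++ Q ∧ w = Q ++ [true, false] ++ P ∧
        (P.length + 2 = p ∧ Q.length + 2 = q ∨ P.length + 2 = q ∧ Q.length + 2 = p) := by
    intro w p q hn hco hp hq hlen hp2 hpq hnu
    set A := w.take (p - 2) with hAdef
    set B := w.take (q - 2) with hBdef
    have hAlen : A.length = p - 2 := by rw [hAdef, length_take]; omega
    have hBlen : B.length = q - 2 := by rw [hBdef, length_take]; omega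
    have hd1 : w.drop q = A := by
      rw [drop_eq_take_of_period hq, hAdef, show w.length - q = p - 2 by omega]
    have hd2 : w.drop p = B := by
      rw [drop_eq_take_of_period hp, hBdef, show w.length - p = q - 2 by omega]
    obtain ⟨a, ha⟩ : ∃ a, w[q-2]? = some a :=
      ⟨_, getElem?_eq_getElem (by omega)⟩
    obtain ⟨b, hb⟩ : ∃ b, w[q-1]? = some b :=
      ⟨_, getElem?_eq_getElem (by omega)⟩
    obtain ⟨c, hc⟩ : ∃ c, w[p-2]? = some c :=
      ⟨_, getElem?_eq_getElem (by omega)⟩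
    obtain ⟨d, hd⟩ : ∃ d, w[p-1]? = some d :=
      ⟨_, getElem?_eq_getElem (by omega)⟩
    have htq : w.take q = B ++ [a, b] := by
      have e := take_add_two (k := q - 2) ha
        (by rw [show q - 2 + 1 = q - 1 by omega]; exact hb)
      rw [show q - 2 + 2 = q by omega] at e
      rw [e, hBdef]
    have htp : w.take p = A ++ [c, d] := by
      have e := take_add_two (k := p - 2) hc
        (by rw [show p - 2 + 1 = p - 1 by omega]; exact hd)
      rw [show p - 2 + 2 = p by omega] at e
      rw [e, hAdef]
    have hw1 : w = A ++ [c, d] ++ B := by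
      conv_lhs => rw [← take_append_drop p w]
      rw [htp, hd2]
    have hw2 : w = B ++ [a, b] ++ A := by
      conv_lhs => rw [← take_append_drop q w]
      rw [htq, hd1]
    have hgB : ∀ i, i < q - 2 → w[i]? = B[i]? := by
      intro i hi
      rw [hBdef, getElem?_take, if_pos hi]
    have hBp : _root_.HasPeriod B p := by rw [hBdef]; exact hasPeriod_take hp
    have hBqp : _root_.HasPeriod B (q - p) := by
      intro i hi
      rw [hBlen] at hi
      rw [← hgB i (by omega), ← hgB (i + (q - p)) (by omega)]
      have s1 := hq i (by omega)
      have s2 := hp (i + (q - p)) (by omega)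
      rw [s1, s2, show i + (q - p) + p = i + q by omega]
    have hBco : Nat.Coprime p (q - p) :=
      Nat.coprime_add_self_right.1 (by rwa [show q - p + p = q by omega])
    have hBlen2 : B.length + 2 = p + (q - p) := by omega
    rcases IH B.length (by omega) B p (q - p) rfl hBco hBp hBqp hBlen2 with
      ⟨x, k, hBx⟩ | ⟨P', Q', hP', hQ', hB1, hB2, hlens⟩
    · -- B is a power of a letter
      have hk : k = q - 2 := by rw [hBx, length_replicate] at hBlen; omega
      have hA : A = B.take (p - 2) := by
        rw [hAdef, hBdef, take_take, show (p-2) ⊓ (q-2) = p - 2 by omega]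
      have hArep : A = replicate (p - 2) x := by
        rw [hA, hBx, take_replicate, show (p-2) ⊓ k = p - 2 by omega]
      have hcx : c = x := by
        have e : w[p-2]? = some x := by
          rw [hw2, tri_get_left (by omega), hBx, getElem?_replicate, if_pos (by omega)]
        rw [hc] at e
        exact Option.some.inj e
      by_cases hdx : d = x
      · exfalso
        apply hnu
        refine ⟨x, (p - 2) + (2 + (q - 2)), ?_⟩
        rw [hw1, hArep, hBx, hcx, hdx, hk, replicate_add, replicate_add, append_assoc]
        rfl
      · have hqp1 : q = p + 1 := by
          by_contra hne
          have e : w[p-1]? = some x := by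
            rw [hw2, tri_get_left (by omega), hBx, getElem?_replicate, if_pos (by omega)]
          rw [hd] at e
          exact hdx (Option.some.inj e)
        have had : a = d := by
          rw [show q - 2 = p - 1 by omega, hd] at ha
          exact (Option.some.inj ha).symm
        have hbx : b = x := by
          have e : w[p]? = some x := by
            have t := tri_get_right (P := A) (Q := B) (a := c) (b := d) 0
            rw [show A.length + 2 + 0 = p by omega] at t
            rw [hw1, t, hBx, getElem?_replicate, if_pos (by omega)]
          rw [show q - 1 = p by omega, e] at hb
          exact (Option.some.inj hb).symm
        have hdx' : d = !x := by revert hdx; cases d <;> cases x <;> decide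
        cases x with
        | false =>
          refine ⟨A, B, by rw [hArep]; exact pal_replicate _ _,
            by rw [hBx]; exact pal_replicate _ _, ?_, ?_, Or.inl ⟨by omega, by omega⟩⟩
          · rw [hw1, hcx, hdx']; rfl
          · rw [hw2, had, hdx', hbx]; rfl
        | true =>
          refine ⟨B, A, by rw [hBx]; exact pal_replicate _ _,
            by rw [hArep]; exact pal_replicate _ _, ?_, ?_, Or.inr ⟨by omega, by omega⟩⟩
          · rw [hw2, had, hdx', hbx]; rfl
          · rw [hw1, hcx, hdx']; rfl
    · -- B decomposes
      have hBpal : B.Palindrome := pal_of_decomp hP' hQ' hB1 hB2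
      have hB'len : P'.length + Q'.length + 2 = q - 2 := by
        rw [hB1, tri_len] at hBlen; omega
      rcases hlens with ⟨e1, e2⟩ | ⟨e1, e2⟩
      · -- |P'| + 2 = p
        have hqp2 : p + 2 ≤ q := by omega
        have hA' : A = P' := by
          have t : B.take (p - 2) = P' := by
            rw [hB1, append_assoc]
            exact take_left' (by omega)
          rw [hAdef, hBdef, take_take, show (p-2) ⊓ (q-2) = p - 2 by omega] at *
          rw [← t]
        have hcval : c = false := by
          have e : w[p-2]? = some false := by
            rw [hgB (p-2) (by omega), hB1, show p - 2 = P'.length by omega]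
            exact tri_get_a
          rw [hc] at e; exact Option.some.inj e
        have hdval : d = true := by
          have e : w[p-1]? = some true := by
            rw [hgB (p-1) (by omega), hB1, show p - 1 = P'.length + 1 by omega]
            exact tri_get_b
          rw [hd] at e; exact Option.some.inj e
        have haval : a = true := by
          have s := hp (q - 2 - p) (by omega)
          rw [show q - 2 - p + p = q - 2 by omega] at s
          have e : w[q-2-p]? = some true := by
            rw [hgB _ (by omega), hB2, show q - 2 - p = Q'.length by omega]
            exact tri_get_a
          rw [s, ha] at e
          exact Option.some.inj e
        have hbval : b = false := by
          have s := hp (q - 1 - p) (by omega)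
          rw [show q - 1 - p + p = q - 1 by omega] at s
          have e : w[q-1-p]? = some false := by
            rw [hgB _ (by omega), hB2, show q - 1 - p = Q'.length + 1 by omega]
            exact tri_get_b
          rw [s, hb] at e
          exact Option.some.inj e
        refine ⟨A, B, by rw [hA']; exact hP', hBpal, ?_, ?_, Or.inl ⟨by omega, by omega⟩⟩
        · rw [hw1, hcval, hdval]
        · rw [hw2, haval, hbval]
      · -- |Q'| + 2 = p
        have hqp2 : p + 2 ≤ q := by omega
        have hA' : A = Q' := by
          have t : B.take (p - 2) = Q' := by
            rw [hB2, append_assoc]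
            exact take_left' (by omega)
          rw [hAdef, hBdef, take_take, show (p-2) ⊓ (q-2) = p - 2 by omega] at *
          rw [← t]
        have hcval : c = true := by
          have e : w[p-2]? = some true := by
            rw [hgB (p-2) (by omega), hB2, show p - 2 = Q'.length by omega]
            exact tri_get_a
          rw [hc] at e; exact Option.some.inj e
        have hdval : d = false := by
          have e : w[p-1]? = some false := by
            rw [hgB (p-1) (by omega), hB2, show p - 1 = Q'.length + 1 by omega]
            exact tri_get_b
          rw [hd] at e; exact Option.some.inj e
        have haval : a = false := by
          have s := hp (q - 2 - p) (by omega)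
          rw [show q - 2 - p + p = q - 2 by omega] at s
          have e : w[q-2-p]? = some false := by
            rw [hgB _ (by omega), hB1, show q - 2 - p = P'.length by omega]
            exact tri_get_a
          rw [s, ha] at e
          exact Option.some.inj e
        have hbval : b = true := by
          have s := hp (q - 1 - p) (by omega)
          rw [show q - 1 - p + p = q - 1 by omega] at s
          have e : w[q-1-p]? = some true := by
            rw [hgB _ (by omega), hB1, show q - 1 - p = P'.length + 1 by omega]
            exact tri_get_b
          rw [s, hb] at e
          exact Option.some.inj e
        refine ⟨B, A, hBpal, by rw [hA']; exact hQ', ?_, ?_, Or.inr ⟨by omega, by omega⟩⟩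
        · rw [hw2, haval, hbval]
        · rw [hw1, hcval, hdval]
  intro w p q hn hco hp hq hlen
  by_cases hu : ∃ (x : Bool) (k : ℕ), w = replicate k x
  · exact Or.inl hu
  right
  have hp1 : p ≠ 1 := by
    rintro rfl
    exact hu (replicate_of_period_one hp)
  have hq1 : q ≠ 1 := by
    rintro rfl
    exact hu (replicate_of_period_one hq)
  have hp0 : p ≠ 0 := by
    rintro rfl
    rw [Nat.coprime_zero_left] at hco
    exact hq1 hco
  have hq0 : q ≠ 0 := by
    rintro rfl
    rw [Nat.coprime_zero_right] at hco
    exact hp1 hco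
  rcases lt_trichotomy p q with h | h | h
  · exact core w p q hn hco hp hq hlen (by omega) h hu
  · exfalso
    subst h
    exact hp1 (by simpa [Nat.Coprime, Nat.gcd_self] using hco)
  · obtain ⟨P, Q, a1, a2, a3, a4, a5⟩ :=
      core w q p hn hco.symm hq hp (by omega) (by omega) h hu
    exact ⟨P, Q, a1, a2, a3, a4, a5.symm⟩

end CentralAux

/-- Combinatorial structure of central words: `w` is central iff it is a power of a
single letter or `w = P01Q = Q10P` for palindromes `P`, `Q`; moreover in that case
`P` and `Q` are central, `|P|+2` and `|Q|+2` are coprime periods of `w`. -/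
theorem stmt4 (w : List Bool) :
    (Central w ↔
      ((∃ (x : Bool) (n : ℕ), w = List.replicate n x) ∨
        ∃ P Q : List Bool, P.Palindrome ∧ Q.Palindrome ∧
          w = P ++ [false, true] ++ Q ∧ w = Q ++ [true, false] ++ P)) ∧
    (∀ P Q : List Bool, P.Palindrome → Q.Palindrome →
      w = P ++ [false, true] ++ Q → w = Q ++ [true, false] ++ P →
      Central P ∧ Central Q ∧ Nat.Coprime (P.length + 2) (Q.length + 2) ∧
        HasPeriod w (P.length + 2) ∧ HasPeriod w (Q.length + 2)) := by
  constructor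
  · constructor
    · intro hc
      obtain ⟨p, q, hco, hp, hq, hlen⟩ := hc
      rcases mainA w.length w p q rfl hco hp hq hlen with h | ⟨P, Q, h1, h2, h3, h4, _⟩
      · exact Or.inl h
      · exact Or.inr ⟨P, Q, h1, h2, h3, h4⟩
    · rintro (⟨x, k, rfl⟩ | ⟨P, Q, hP, hQ, h1, h2⟩)
      · exact central_replicate k x
      · obtain ⟨cP, cQ, cop⟩ :=
          mainB w.length w P Q false true (by simp) rfl hP hQ h1 h2
        have hper := periods_of_decomp h1 h2
        refine ⟨P.length + 2, Q.length + 2, cop, hper.2, hper.1, ?_⟩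
        rw [h1, tri_len]
        omega
  · intro P Q hP hQ h1 h2
    obtain ⟨cP, cQ, cop⟩ :=
      mainB w.length w P Q false true (by simp) rfl hP hQ h1 h2
    have hper := periods_of_decomp h1 h2
    exact ⟨cP, cQ, cop, hper.2, hper.1⟩
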